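/- Let p(z) = z^n + a_{n-1}z^{n-1} + … + a_1 z + a_0 be a monic polynomial over ℂ of degree n ≥ 3. Then every complex root λ of p satisfies |λ| ≤ Γ(p); equivalently, μ(p) ≤ Γ(p). -/

import Mathlib

open Finset

/-- The `k`-th term in the definition of `τ`: for `k = 3` it is `(|a (n-3)|/2.15)^(1/3)`,
for `k = 4` it is `(|a (n-4)|/2)^(1/4)`, and for `k ≥ 5` it is `|a (n-k)|^(1/k)`. -/
noncomputable def tauTerm (n k : ℕ) (a : ℕ → ℂ) : ℝ :=
  if k = 3 then (‖a (n - 3)‖ / 2.15) ^ ((1 : ℝ) / 3)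
  else if k = 4 then (‖a (n - 4)‖ / 2) ^ ((1 : ℝ) / 4)
  else (‖a (n - k)‖) ^ ((1 : ℝ) / k)

/-- `τ = max{(|a_{n-3}|/2.15)^(1/3), (|a_{n-4}|/2)^(1/4), |a_{n-5}|^(1/5), …, |a_0|^(1/n)}`. -/
noncomputable def tau (n : ℕ) (a : ℕ → ℂ) (hn : 3 ≤ n) : ℝ :=
  (Finset.Icc 3 n).sup' (Finset.nonempty_Icc.mpr hn) (fun k => tauTerm n k a)

/-- The root bound `Γ(p)`. -/
noncomputable def Gamma (n : ℕ) (a : ℕ → ℂ) (hn : 3 ≤ n) : ℝ :=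
  max (Real.sqrt 3.15 *
        Real.sqrt ((tau n a hn) ^ 2 + max (‖a (n - 2)‖) (2 * (tau n a hn) ^ 2)))
      ((‖a (n - 1)‖ +
        Real.sqrt ((‖a (n - 1)‖) ^ 2 +
          4 * ((tau n a hn) ^ 2 + max (‖a (n - 2)‖) (2.15 * (tau n a hn) ^ 2)))) / 2)

/-- Auxiliary coefficient weights: `2.15` for `k = 3`, `2` for `k = 4`, `1` otherwise. -/
noncomputable def cfun (k : ℕ) : ℝ := if k = 3 then 2.15 else if k = 4 then 2 else 1

lemma cfun_nonneg (k : ℕ) : 0 ≤ cfun k := by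
  unfold cfun; split_ifs <;> norm_num

lemma tauTerm_nonneg (n k : ℕ) (a : ℕ → ℂ) : 0 ≤ tauTerm n k a := by
  unfold tauTerm
  split_ifs <;> exact Real.rpow_nonneg (by positivity) _

lemma tauTerm_le_tau (n k : ℕ) (a : ℕ → ℂ) (hn : 3 ≤ n) (hk3 : 3 ≤ k) (hkn : k ≤ n) :
    tauTerm n k a ≤ tau n a hn := by
  unfold tau
  exact Finset.le_sup' (fun k => tauTerm n k a) (Finset.mem_Icc.mpr ⟨hk3, hkn⟩)

lemma tau_nonneg (n : ℕ) (a : ℕ → ℂ) (hn : 3 ≤ n) : 0 ≤ tau n a hn :=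
  le_trans (tauTerm_nonneg n 3 a) (tauTerm_le_tau n 3 a hn (le_refl 3) hn)

lemma coeff_le (n k : ℕ) (a : ℕ → ℂ) (hn : 3 ≤ n) (hk3 : 3 ≤ k) (hkn : k ≤ n) :
    ‖a (n - k)‖ ≤ cfun k * (tau n a hn) ^ k := by
  have hts : tauTerm n k a ≤ tau n a hn := tauTerm_le_tau n k a hn hk3 hkn
  have hs0 : 0 ≤ tau n a hn := tau_nonneg n a hn
  have hx0 : (0:ℝ) ≤ ‖a (n - k)‖ := norm_nonneg _
  rcases eq_or_ne k 3 with rfl | h3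
  · have hd0 : (0:ℝ) ≤ ‖a (n-3)‖ / 2.15 := by positivity
    have key : ((‖a (n-3)‖ / 2.15) ^ ((1:ℝ)/3)) ^ (3:ℕ)
        = ‖a (n-3)‖ / 2.15 := by
      rw [← Real.rpow_natCast ((‖a (n-3)‖ / 2.15) ^ ((1:ℝ)/3)) 3,
          ← Real.rpow_mul hd0]
      norm_num
    have hts' : (‖a (n-3)‖ / 2.15) ^ ((1:ℝ)/3) ≤ tau n a hn := by
      simpa [tauTerm] using hts
    have h := pow_le_pow_left₀ (Real.rpow_nonneg hd0 _) hts' 3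
    rw [key] at h
    rw [cfun, if_pos rfl]
    have := (div_le_iff₀ (by norm_num : (0:ℝ) < 2.15)).mp h
    linarith
  rcases eq_or_ne k 4 with rfl | h4
  · have hd0 : (0:ℝ) ≤ ‖a (n-4)‖ / 2 := by positivity
    have key : ((‖a (n-4)‖ / 2) ^ ((1:ℝ)/4)) ^ (4:ℕ)
        = ‖a (n-4)‖ / 2 := by
      rw [← Real.rpow_natCast ((‖a (n-4)‖ / 2) ^ ((1:ℝ)/4)) 4,
          ← Real.rpow_mul hd0]
      norm_num
    have hts' : (‖a (n-4)‖ / 2) ^ ((1:ℝ)/4) ≤ tau n a hn := by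
      simpa [tauTerm] using hts
    have h := pow_le_pow_left₀ (Real.rpow_nonneg hd0 _) hts' 4
    rw [key] at h
    rw [cfun, if_neg (by norm_num), if_pos rfl]
    have := (div_le_iff₀ (by norm_num : (0:ℝ) < 2)).mp h
    linarith
  · have hk0 : (k:ℝ) ≠ 0 := Nat.cast_ne_zero.mpr (by omega)
    have key : ((‖a (n-k)‖) ^ ((1:ℝ)/k)) ^ (k:ℕ) = ‖a (n-k)‖ := by
      rw [← Real.rpow_natCast ((‖a (n-k)‖) ^ ((1:ℝ)/k)) k,
          ← Real.rpow_mul hx0, one_div, inv_mul_cancel₀ hk0, Real.rpow_one]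
    have hts' : (‖a (n-k)‖) ^ ((1:ℝ)/k) ≤ tau n a hn := by
      unfold tauTerm at hts
      rw [if_neg h3, if_neg h4] at hts
      exact hts
    have h := pow_le_pow_left₀ (Real.rpow_nonneg hx0 _) hts' k
    rw [key] at h
    rw [cfun, if_neg h3, if_neg h4, one_mul]
    exact h

lemma wsum_le (m : ℕ) : ∑ j ∈ Finset.range m, cfun (j+3) * (1/3:ℝ)^(j+1) ≤ 1 := by
  match m with
  | 0 => simp
  | 1 =>
    simp only [Finset.sum_range_one]
    rw [cfun, if_pos rfl]
    norm_num
  | (m+2) =>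
    rw [Finset.sum_range_succ', Finset.sum_range_succ']
    have h1 : ∑ i ∈ Finset.range m, cfun (i+1+1+3) * (1/3:ℝ)^(i+1+1+1)
        ≤ (1/27:ℝ) * ∑ i ∈ Finset.range m, (1/3:ℝ)^i := by
      rw [Finset.mul_sum]
      apply Finset.sum_le_sum
      intro i _
      have hc : cfun (i+1+1+3) = 1 := by
        rw [cfun, if_neg (by omega), if_neg (by omega)]
      rw [hc, one_mul]
      rw [show i+1+1+1 = i+3 by ring, pow_add, mul_comm]
      norm_num
    have hgeom : ∑ i ∈ Finset.range m, (1/3:ℝ)^i ≤ 3/2 := by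
      rw [geom_sum_eq (by norm_num : (1/3:ℝ) ≠ 1)]
      have h := pow_nonneg (by norm_num : (0:ℝ) ≤ 1/3) m
      rw [div_le_iff_of_neg (by norm_num : (1/3:ℝ) - 1 < 0)]
      linarith
    have hf0 : cfun (0+3) * (1/3:ℝ)^(0+1) = 2.15 * (1/3) := by
      rw [cfun, if_pos rfl]
      norm_num
    have hf1 : cfun (0+1+3) * (1/3:ℝ)^(0+1+1) = 2 * (1/9) := by
      rw [cfun, if_neg (by omega), if_pos rfl]
      norm_num
    rw [hf0, hf1]
    nlinarith [h1, hgeom]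

set_option maxHeartbeats 1000000 in
/-- Every root of the monic polynomial `z^n + Σ_{i<n} a i z^i` (degree `n ≥ 3`)
has modulus at most `Γ(p)`; equivalently `μ(p) ≤ Γ(p)`. -/
theorem maxRootModulus_le_Gamma (n : ℕ) (hn : 3 ≤ n) (a : ℕ → ℂ) (lam : ℂ)
    (hroot : lam ^ n + ∑ i ∈ Finset.range n, a i * lam ^ i = 0) :
    ‖lam‖ ≤ Gamma n a hn := by
  by_contra hcon
  push_neg at hcon
  set s := tau n a hn with hsdef
  set r := ‖lam‖ with hrdef
  set b := ‖a (n-1)‖ with hbdef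
  set c2 := ‖a (n-2)‖ with hc2def
  have hs0 : 0 ≤ s := tau_nonneg n a hn
  have hb0 : 0 ≤ b := norm_nonneg _
  have hc20 : 0 ≤ c2 := norm_nonneg _
  have hr0 : 0 ≤ r := norm_nonneg _
  unfold Gamma at hcon
  rw [← hsdef, ← hbdef, ← hc2def] at hcon
  have hGamma1 : Real.sqrt 3.15 * Real.sqrt (s^2 + max c2 (2*s^2)) < r :=
    (le_max_left _ _).trans_lt hcon
  have hGamma2 : (b + Real.sqrt (b^2 + 4*(s^2 + max c2 (2.15*s^2))))/2 < r :=
    (le_max_right _ _).trans_lt hcon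
  have hrpos : 0 < r :=
    lt_of_le_of_lt (div_nonneg (add_nonneg hb0 (Real.sqrt_nonneg _)) (by norm_num)) hGamma2
  -- square the first bound
  have hX0 : 0 ≤ s^2 + max c2 (2*s^2) :=
    add_nonneg (sq_nonneg s) (le_trans hc20 (le_max_left _ _))
  have h1 : 3.15 * (s^2 + max c2 (2*s^2)) < r^2 := by
    have hmm := mul_self_lt_mul_self
      (mul_nonneg (Real.sqrt_nonneg 3.15) (Real.sqrt_nonneg _)) hGamma1
    have e1 : Real.sqrt 3.15 * Real.sqrt 3.15 = 3.15 :=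
      Real.mul_self_sqrt (by norm_num)
    have e2 : Real.sqrt (s^2 + max c2 (2*s^2)) * Real.sqrt (s^2 + max c2 (2*s^2))
        = s^2 + max c2 (2*s^2) := Real.mul_self_sqrt hX0
    nlinarith [hmm, e1, e2]
  have h9 : 9.45 * s^2 < r^2 := by
    have hm : 2*s^2 ≤ max c2 (2*s^2) := le_max_right _ _
    nlinarith [h1]
  have h3s : 3*s < r := by
    by_contra h
    push_neg at h
    nlinarith [h9]
  -- square the second bound
  have hmaxc : c2 ≤ max c2 (2.15*s^2) := le_max_left _ _
  have hmax0 : 0 ≤ max c2 (2.15*s^2) := le_trans hc20 hmaxc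
  have hD0 : 0 ≤ b^2 + 4*(s^2 + max c2 (2.15*s^2)) := by nlinarith [sq_nonneg b, sq_nonneg s]
  have hsqD := Real.sq_sqrt hD0
  have hDnn := Real.sqrt_nonneg (b^2 + 4*(s^2 + max c2 (2.15*s^2)))
  have hquad : b*r + (s^2 + c2) < r^2 := by
    nlinarith [hGamma2, hsqD, hDnn, hrpos, hmaxc]
  -- decompose n = m + 2
  obtain ⟨m, rfl⟩ : ∃ m, n = m + 2 := ⟨n-2, by omega⟩
  have hbm : b = ‖a (m+1)‖ := by
    rw [hbdef]; simp only [show m+2-1 = m+1 from by omega]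
  have hcm : c2 = ‖a m‖ := by
    rw [hc2def]; simp only [show m+2-2 = m from by omega]
  -- the basic root estimate
  have hsum : r ^ (m+2) ≤ ∑ i ∈ Finset.range (m+2), ‖a i‖ * r ^ i := by
    have h0 : lam ^ (m+2) = -∑ i ∈ Finset.range (m+2), a i * lam ^ i := by
      linear_combination hroot
    calc r ^ (m+2) = ‖lam ^ (m+2)‖ := (norm_pow _ _).symm
      _ = ‖∑ i ∈ Finset.range (m+2), a i * lam ^ i‖ := by
          rw [h0]; exact norm_neg _
      _ ≤ ∑ i ∈ Finset.range (m+2), ‖a i * lam ^ i‖ :=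
          norm_sum_le _ _
      _ = ∑ i ∈ Finset.range (m+2), ‖a i‖ * r ^ i := by
          simp [norm_mul, norm_pow, hrdef]
  rw [Finset.sum_range_succ, Finset.sum_range_succ] at hsum
  -- bound the low-order part of the sum
  have hmid : ∀ i ∈ Finset.range m, ‖a i‖ * r ^ i
      ≤ (cfun (m-1-i+3) * (1/3:ℝ)^(m-1-i+1)) * (s^2 * r^m) := by
    intro i hi
    rw [Finset.mem_range] at hi
    have hk3 : 3 ≤ (m+2) - i := by omega
    have hkn : (m+2) - i ≤ m+2 := by omega
    have hai : ‖a i‖ ≤ cfun ((m+2)-i) * s ^ ((m+2)-i) := by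
      have h := coeff_le (m+2) ((m+2)-i) a hn hk3 hkn
      rw [show (m+2) - ((m+2)-i) = i by omega] at h
      exact h
    have hsk : s ^ ((m+2)-i) ≤ s^2 * (r/3)^(m-1-i+1) := by
      have hpl : s ^ (m-1-i+1) ≤ (r/3)^(m-1-i+1) :=
        pow_le_pow_left₀ hs0 (by linarith) _
      calc s ^ ((m+2)-i) = s^2 * s^(m-1-i+1) := by
            rw [← pow_add]; congr 1; omega
        _ ≤ s^2 * (r/3)^(m-1-i+1) :=
            mul_le_mul_of_nonneg_left hpl (sq_nonneg s)
    have he : (r/3) ^ (m-1-i+1) * r ^ i = (1/3:ℝ)^(m-1-i+1) * r^m := by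
      have hexp : (m-1-i+1) + i = m := by omega
      calc (r/3) ^ (m-1-i+1) * r ^ i
          = (1/3:ℝ)^(m-1-i+1) * (r^(m-1-i+1) * r^i) := by
            rw [div_pow, one_div, inv_pow]
            ring
        _ = (1/3:ℝ)^(m-1-i+1) * r^m := by rw [← pow_add, hexp]
    calc ‖a i‖ * r ^ i
        ≤ (cfun ((m+2)-i) * s ^ ((m+2)-i)) * r^i :=
          mul_le_mul_of_nonneg_right hai (pow_nonneg hr0 i)
      _ ≤ (cfun ((m+2)-i) * (s^2 * (r/3)^(m-1-i+1))) * r^i :=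
          mul_le_mul_of_nonneg_right
            (mul_le_mul_of_nonneg_left hsk (cfun_nonneg _)) (pow_nonneg hr0 i)
      _ = cfun ((m+2)-i) * s^2 * ((r/3)^(m-1-i+1) * r^i) := by ring
      _ = cfun ((m+2)-i) * s^2 * ((1/3:ℝ)^(m-1-i+1) * r^m) := by rw [he]
      _ = (cfun (m-1-i+3) * (1/3:ℝ)^(m-1-i+1)) * (s^2 * r^m) := by
          rw [show (m+2)-i = m-1-i+3 by omega]; ring
  have hmid2 : ∑ i ∈ Finset.range m, ‖a i‖ * r^i ≤ s^2 * r^m := by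
    calc ∑ i ∈ Finset.range m, ‖a i‖ * r^i
        ≤ ∑ i ∈ Finset.range m, (cfun (m-1-i+3) * (1/3:ℝ)^(m-1-i+1)) * (s^2*r^m) :=
          Finset.sum_le_sum hmid
      _ = (∑ i ∈ Finset.range m, cfun (m-1-i+3) * (1/3:ℝ)^(m-1-i+1)) * (s^2*r^m) := by
          rw [← Finset.sum_mul]
      _ = (∑ j ∈ Finset.range m, cfun (j+3) * (1/3:ℝ)^(j+1)) * (s^2*r^m) := by
          exact congrArg (· * (s^2*r^m))
            (Finset.sum_range_reflect (fun j => cfun (j+3) * (1/3:ℝ)^(j+1)) m)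
      _ ≤ 1 * (s^2*r^m) :=
          mul_le_mul_of_nonneg_right (wsum_le m) (mul_nonneg (sq_nonneg s) (pow_nonneg hr0 m))
      _ = s^2*r^m := one_mul _
  have hfin : r^(m+2) < r^(m+2) := by
    have hp : 0 < r^m := pow_pos hrpos m
    have hmul := mul_lt_mul_of_pos_right hquad hp
    calc r^(m+2)
        ≤ (∑ i ∈ Finset.range m, ‖a i‖ * r^i)
            + ‖a m‖ * r^m + ‖a (m+1)‖ * r^(m+1) := hsum
      _ ≤ s^2*r^m + c2 * r^m + b * r^(m+1) := by
          rw [hbm, hcm]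
          have : ‖a m‖ * r^m ≤ ‖a m‖ * r^m := le_refl _
          linarith [hmid2]
      _ = (b*r + (s^2 + c2))*r^m := by rw [pow_succ]; ring
      _ < r^2*r^m := hmul
      _ = r^(m+2) := by ring
  exact absurd hfin (lt_irrefl _)
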